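/- For each n ≥ 1, each k with 0 ≤ k ≤ ⌊n/2⌋ − 1, and each ℓ with k < ℓ < n − k: if G is a graph with ν(G) ≥ n, then m_k(G) < m_ℓ(G). -/

import Mathlib

/-- `M` is a matching of `G`, viewed as a finite set of edges of `G` that are
pairwise vertex-disjoint. -/
def IsMatchingFinset {V : Type*} (G : SimpleGraph V) (M : Finset (Sym2 V)) : Prop :=
  (↑M : Set (Sym2 V)) ⊆ G.edgeSet ∧
    (↑M : Set (Sym2 V)).Pairwise (fun e f => ∀ x, x ∈ e → x ∉ f)

/-- The number of matchings of size `k` in `G`. -/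
noncomputable def matchCount {V : Type*} (G : SimpleGraph V) (k : ℕ) : ℕ :=
  {M : Finset (Sym2 V) | IsMatchingFinset G M ∧ M.card = k}.ncard

/-- One-step strict monotonicity of binomial coefficients. -/
lemma choose_lt_succ_aux {f j : ℕ} (h : j + (j + 1) < f) :
    f.choose j < f.choose (j + 1) := by
  have hj : j ≤ f := by omega
  have hpos : 0 < f.choose j := Nat.choose_pos hj
  have hid := Nat.choose_succ_right_eq f j
  have h1 : f.choose j * (j + 1) < f.choose j * (f - j) :=
    mul_lt_mul_of_pos_left (show j + 1 < f - j by omega) hpos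
  rw [← hid] at h1
  exact Nat.lt_of_mul_lt_mul_right h1

lemma choose_lt_mono_aux (f : ℕ) : ∀ (d a : ℕ), 0 < d → 2 * (a + d) ≤ f →
    f.choose a < f.choose (a + d) := by
  intro d
  induction d with
  | zero => intro a h; omega
  | succ d ih =>
    intro a _ hle
    rcases Nat.eq_zero_or_pos d with hd | hd
    · subst hd
      exact choose_lt_succ_aux (by omega)
    · have h1 : f.choose a < f.choose (a + d) := ih a hd (by omega)
      have h2 : f.choose (a + d) < f.choose (a + d + 1) :=
        choose_lt_succ_aux (by omega)
      have : a + (d + 1) = a + d + 1 := by omega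
      rw [this]
      exact lt_trans h1 h2

/-- If `a < b` and `a + b < f` then `C(f,a) < C(f,b)`. -/
lemma choose_lt_choose {f a b : ℕ} (hab : a < b) (h : a + b < f) :
    f.choose a < f.choose b := by
  by_cases hb : 2 * b ≤ f
  · have := choose_lt_mono_aux f (b - a) a (by omega) (by omega)
    have hba : a + (b - a) = b := by omega
    rwa [hba] at this
  · have hbf : b ≤ f := by omega
    have hsymm : f.choose (f - b) = f.choose b := Nat.choose_symm hbf
    have hac : a < f - b := by omega
    have := choose_lt_mono_aux f (f - b - a) a (by omega) (by omega)
    have hba : a + (f - b - a) = f - b := by omega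
    rw [hba, hsymm] at this
    exact this

theorem stmt_14 {V : Type*} [Fintype V] (G : SimpleGraph V) (n k ℓ : ℕ)
    (hn : 1 ≤ n) (hk : k + 1 ≤ n / 2) (hkℓ : k < ℓ) (hℓ : ℓ < n - k)
    (hν : ∃ M : Finset (Sym2 V), IsMatchingFinset G M ∧ n ≤ M.card) :
    matchCount G k < matchCount G ℓ := by
  classical
  have hn2 : 2 * k + 2 ≤ n := by omega
  have hkln : k + ℓ < n := by omega
  obtain ⟨M₀, hM₀, hn₀⟩ := hν
  obtain ⟨M, hMsub, hMcard⟩ := Finset.exists_subset_card_eq hn₀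
  have hMc : (↑M : Set (Sym2 V)) ⊆ (↑M₀ : Set (Sym2 V)) :=
    Finset.coe_subset.mpr hMsub
  have hM : IsMatchingFinset G M := ⟨hMc.trans hM₀.1, hM₀.2.mono hMc⟩
  -- free edges of `M` relative to a matching `P`
  set F : Finset (Sym2 V) → Finset (Sym2 V) :=
    fun P => M.filter (fun e => ∀ f ∈ P, ∀ x, x ∈ e → x ∉ f) with hF
  -- counting matchings as a Finset card
  have hcount : ∀ j : ℕ, matchCount G j =
      (Finset.univ.filter
        (fun A : Finset (Sym2 V) => IsMatchingFinset G A ∧ A.card = j)).card := by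
    intro j
    rw [matchCount, ← Set.ncard_coe_finset]
    congr 1
    ext A
    simp
  -- fiberwise decomposition along `A ↦ A \ M`
  have hsum : ∀ j : ℕ, matchCount G j =
      ∑ P ∈ (Finset.univ : Finset (Finset (Sym2 V))),
        (Finset.univ.filter
          (fun A : Finset (Sym2 V) =>
            (IsMatchingFinset G A ∧ A.card = j) ∧ A \ M = P)).card := by
    intro j
    rw [hcount j,
      Finset.card_eq_sum_card_fiberwise
        (f := fun A => A \ M) (t := Finset.univ) (fun x _ => Finset.mem_univ _)]
    apply Finset.sum_congr rfl
    intro P _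
    rw [Finset.filter_filter]
  -- the cardinality of a fiber
  have fibcard : ∀ (j : ℕ) (P : Finset (Sym2 V)),
      (↑P : Set (Sym2 V)) ⊆ G.edgeSet →
      (↑P : Set (Sym2 V)).Pairwise (fun e f => ∀ x, x ∈ e → x ∉ f) →
      Disjoint P M → P.card ≤ j →
      (Finset.univ.filter
        (fun A : Finset (Sym2 V) =>
          (IsMatchingFinset G A ∧ A.card = j) ∧ A \ M = P)).card
        = (F P).card.choose (j - P.card) := by
    intro j P hPG hPp hPM hpj
    rw [← Finset.card_powersetCard]
    apply Finset.card_bij' (fun A _ => A ∩ M) (fun S _ => P ∪ S)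
    · -- forward membership
      intro A hA
      rw [Finset.mem_filter] at hA
      obtain ⟨_, ⟨⟨hAG, hApair⟩, hAcard⟩, hAM⟩ := hA
      rw [Finset.mem_powersetCard]
      constructor
      · intro e he
        rw [Finset.mem_inter] at he
        rw [hF]
        simp only [Finset.mem_filter]
        refine ⟨he.2, ?_⟩
        intro f hf x hxe
        have hfA : f ∈ A := by
          have : f ∈ A \ M := hAM ▸ hf
          exact (Finset.mem_sdiff.mp this).1
        have hfM : f ∉ M := by
          have : f ∈ A \ M := hAM ▸ hf
          exact (Finset.mem_sdiff.mp this).2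
        have hne : e ≠ f := by
          intro hef; exact hfM (hef ▸ he.2)
        exact hApair (Finset.mem_coe.mpr he.1) (Finset.mem_coe.mpr hfA) hne x hxe
      · have h1 := Finset.card_sdiff_add_card_inter A M
        have h2 : (A \ M).card = P.card := by rw [hAM]
        omega
    · -- backward membership
      intro S hS
      rw [Finset.mem_powersetCard] at hS
      obtain ⟨hSF, hScard⟩ := hS
      have hSM : S ⊆ M := hSF.trans (Finset.filter_subset _ _)
      have hPS : Disjoint P S := hPM.mono_right hSM
      rw [Finset.mem_filter]
      refine ⟨Finset.mem_univ _, ⟨⟨?_, ?_⟩, ?_⟩, ?_⟩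
      · -- edges of G
        rw [Finset.coe_union]
        intro e he
        rcases he with he | he
        · exact hPG he
        · exact hM.1 (Finset.mem_coe.mpr (hSM (Finset.mem_coe.mp he)))
      · -- pairwise disjoint
        intro e he f hf hne
        rw [Finset.mem_coe, Finset.mem_union] at he hf
        have hfree : ∀ g ∈ S, ∀ g' ∈ P, ∀ x, x ∈ g → x ∉ g' := by
          intro g hg g' hg' x hx
          have := Finset.mem_filter.mp (hSF hg)
          exact this.2 g' hg' x hx
        rcases he with he | he <;> rcases hf with hf | hf
        · exact hPp (Finset.mem_coe.mpr he) (Finset.mem_coe.mpr hf) hne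
        · intro x hxe hxf
          exact hfree f hf e he x hxf hxe
        · intro x hxe
          exact hfree e he f hf x hxe
        · exact hM.2 (Finset.mem_coe.mpr (hSM he)) (Finset.mem_coe.mpr (hSM hf)) hne
      · -- cardinality
        rw [Finset.card_union_of_disjoint hPS, hScard]
        omega
      · -- the fiber condition
        rw [Finset.union_sdiff_distrib]
        have h1 : P \ M = P := Finset.sdiff_eq_self_of_disjoint hPM
        have h2 : S \ M = ∅ := Finset.sdiff_eq_empty_iff_subset.mpr hSM
        rw [h1, h2, Finset.union_empty]
    · -- left inverse
      intro A hA
      rw [Finset.mem_filter] at hA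
      obtain ⟨_, _, hAM⟩ := hA
      rw [← hAM, Finset.sdiff_union_inter]
    · -- right inverse
      intro S hS
      rw [Finset.mem_powersetCard] at hS
      have hSM : S ⊆ M := hS.1.trans (Finset.filter_subset _ _)
      rw [Finset.union_inter_distrib_right,
        Finset.disjoint_iff_inter_eq_empty.mp hPM,
        Finset.inter_eq_left.mpr hSM, Finset.empty_union]
  -- lower bound on the number of free edges
  have freebound : ∀ P : Finset (Sym2 V),
      (↑P : Set (Sym2 V)).Pairwise (fun e f => ∀ x, x ∈ e → x ∉ f) →
      M.card ≤ (F P).card + 2 * P.card := by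
    intro P hPp
    have hFM : F P ⊆ M := Finset.filter_subset _ _
    have hcs : (M \ F P).card = M.card - (F P).card := Finset.card_sdiff_of_subset hFM
    have hFle : (F P).card ≤ M.card := Finset.card_le_card hFM
    rcases Finset.eq_empty_or_nonempty (M \ F P) with hemp | hne
    · have : M.card - (F P).card = 0 := by rw [← hcs, hemp, Finset.card_empty]
      omega
    · -- build injection from blocked edges into vertices covered by P
      obtain ⟨e₀, he₀⟩ := hne
      have hblocked : ∀ e ∈ M \ F P, ∃ x, x ∈ e ∧ ∃ f ∈ P, x ∈ f := by
        intro e he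
        rw [Finset.mem_sdiff] at he
        obtain ⟨heM, heF⟩ := he
        by_contra hcon
        push_neg at hcon
        apply heF
        rw [hF]
        simp only [Finset.mem_filter]
        exact ⟨heM, fun f hf x hxe hxf => (hcon x hxe) f hf hxf⟩
      have hV : Nonempty V := ⟨(hblocked e₀ he₀).choose⟩
      set g : Sym2 V → V := fun e =>
        if h : ∃ x, x ∈ e ∧ ∃ f ∈ P, x ∈ f then h.choose else Classical.arbitrary V
        with hg
      set T : Finset V := P.biUnion (fun f => Finset.univ.filter (fun x => x ∈ f)) with hT
      have hcardT : T.card ≤ 2 * P.card := by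
        calc T.card ≤ ∑ f ∈ P, (Finset.univ.filter (fun x => x ∈ f)).card :=
              Finset.card_biUnion_le
          _ ≤ ∑ _f ∈ P, 2 := by
              apply Finset.sum_le_sum
              intro f _
              induction f using Sym2.ind with
              | _ a b =>
                have hsub : (Finset.univ.filter (fun x => x ∈ s(a, b))) ⊆ {a, b} := by
                  intro x hx
                  rw [Finset.mem_filter, Sym2.mem_iff] at hx
                  rcases hx.2 with h | h <;> simp [h]
                calc (Finset.univ.filter (fun x => x ∈ s(a, b))).card ≤ ({a, b} : Finset V).card :=
                      Finset.card_le_card hsub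
                  _ ≤ 2 := Finset.card_insert_le a {b} |>.trans (by simp)
          _ = 2 * P.card := by rw [Finset.sum_const, smul_eq_mul, Nat.mul_comm]
      have hinj : (M \ F P).card ≤ T.card := by
        apply Finset.card_le_card_of_injOn g
        · intro e he
          have hspec := (hblocked e he).choose_spec
          have hge : g e = (hblocked e he).choose := by
            rw [hg]; simp only []
            rw [dif_pos (hblocked e he)]
          obtain ⟨hx1, f, hf, hx2⟩ := hspec
          rw [hT, Finset.mem_coe, Finset.mem_biUnion]
          exact ⟨f, hf, by rw [Finset.mem_filter]; exact ⟨Finset.mem_univ _, hge ▸ hx2⟩⟩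
        · intro e₁ h₁ e₂ h₂ heq
          rw [Finset.mem_coe] at h₁ h₂
          have hs₁ := (hblocked e₁ h₁).choose_spec
          have hs₂ := (hblocked e₂ h₂).choose_spec
          have hge₁ : g e₁ = (hblocked e₁ h₁).choose := by
            rw [hg]; simp only []; rw [dif_pos (hblocked e₁ h₁)]
          have hge₂ : g e₂ = (hblocked e₂ h₂).choose := by
            rw [hg]; simp only []; rw [dif_pos (hblocked e₂ h₂)]
          by_contra hne
          have hm₁ : e₁ ∈ M := (Finset.mem_sdiff.mp h₁).1
          have hm₂ : e₂ ∈ M := (Finset.mem_sdiff.mp h₂).1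
          have := hM.2 (Finset.mem_coe.mpr hm₁) (Finset.mem_coe.mpr hm₂) hne
            (g e₁) (hge₁ ▸ hs₁.1)
          apply this
          rw [heq, hge₂]
          exact hs₂.1
      omega
  -- pointwise comparison of fibers
  have key : ∀ P : Finset (Sym2 V),
      (Finset.univ.filter
        (fun A : Finset (Sym2 V) =>
          (IsMatchingFinset G A ∧ A.card = k) ∧ A \ M = P)).card ≤
      (Finset.univ.filter
        (fun A : Finset (Sym2 V) =>
          (IsMatchingFinset G A ∧ A.card = ℓ) ∧ A \ M = P)).card := by
    intro P
    rcases Finset.eq_empty_or_nonempty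
        (Finset.univ.filter
          (fun A : Finset (Sym2 V) =>
            (IsMatchingFinset G A ∧ A.card = k) ∧ A \ M = P)) with hemp | hne
    · rw [hemp]; simp
    · obtain ⟨A, hA⟩ := hne
      rw [Finset.mem_filter] at hA
      obtain ⟨_, ⟨⟨hAG, hApair⟩, hAcard⟩, hAM⟩ := hA
      have hPG : (↑P : Set (Sym2 V)) ⊆ G.edgeSet := by
        rw [← hAM]
        exact (Finset.coe_subset.mpr (Finset.sdiff_subset)).trans hAG
      have hPp : (↑P : Set (Sym2 V)).Pairwise (fun e f => ∀ x, x ∈ e → x ∉ f) := by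
        rw [← hAM]
        exact hApair.mono (Finset.coe_subset.mpr (Finset.sdiff_subset))
      have hPM : Disjoint P M := by
        rw [← hAM]; exact Finset.sdiff_disjoint
      have hpk : P.card ≤ k := by
        rw [← hAM, ← hAcard]
        exact Finset.card_le_card (Finset.sdiff_subset)
      rw [fibcard k P hPG hPp hPM hpk, fibcard ℓ P hPG hPp hPM (by omega)]
      have hfb := freebound P hPp
      rw [hMcard] at hfb
      exact le_of_lt (choose_lt_choose (by omega) (by omega))
  -- strict inequality at the empty fiber
  have hFempty : F ∅ = M := by
    rw [hF]
    apply Finset.filter_true_of_mem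
    intro e _
    simp
  have strict :
      (Finset.univ.filter
        (fun A : Finset (Sym2 V) =>
          (IsMatchingFinset G A ∧ A.card = k) ∧ A \ M = ∅)).card <
      (Finset.univ.filter
        (fun A : Finset (Sym2 V) =>
          (IsMatchingFinset G A ∧ A.card = ℓ) ∧ A \ M = ∅)).card := by
    have hPG : (↑(∅ : Finset (Sym2 V)) : Set (Sym2 V)) ⊆ G.edgeSet := by simp
    have hPp : (↑(∅ : Finset (Sym2 V)) : Set (Sym2 V)).Pairwise
        (fun e f => ∀ x, x ∈ e → x ∉ f) := by simp
    have hPM : Disjoint (∅ : Finset (Sym2 V)) M := Finset.disjoint_empty_left M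
    rw [fibcard k ∅ hPG hPp hPM (by simp), fibcard ℓ ∅ hPG hPp hPM (by simp),
      hFempty, hMcard]
    simp only [Finset.card_empty, Nat.sub_zero]
    exact choose_lt_choose hkℓ hkln
  rw [hsum k, hsum ℓ]
  exact Finset.sum_lt_sum (fun P _ => key P) ⟨∅, Finset.mem_univ _, strict⟩
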